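/- (Classical Rosenthal inequality, lower bound) Let 2 ≤ p < ∞ and let (g_n)_{n≥1} be a finite sequence of independent mean-zero random variables in L_p(Ω, ℙ). Then (Σ_n ‖g_n‖_2²)^{1/2} + (Σ_n ‖g_n‖_p^p)^{1/p} ≤ c_p ‖Σ_n g_n‖_p for a constant c_p depending only on p. -/

import Mathlib

open MeasureTheory ProbabilityTheory ENNReal

open Real

noncomputable section

lemma rpow_superadd {q : ℝ} (hq : 1 ≤ q) {a b : ℝ} (ha : 0 ≤ a) (hb : 0 ≤ b) :
    a ^ q + b ^ q ≤ (a + b) ^ q := by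
  have hq0 : q ≠ 0 := by linarith
  have key : ∀ x : ℝ, 0 ≤ x → x ≤ a + b → x ^ q ≤ x * (a + b) ^ (q - 1) := by
    intro x hx hxab
    rcases eq_or_lt_of_le hx with h0 | h0
    · simp [← h0, Real.zero_rpow hq0]
    · calc x ^ q = x * x ^ (q - 1) := by
            rw [← Real.rpow_one_add' hx (by linarith)]; ring_nf
      _ ≤ x * (a + b) ^ (q - 1) := by
            have := Real.rpow_le_rpow hx hxab (by linarith : (0:ℝ) ≤ q - 1)
            nlinarith
  calc a ^ q + b ^ q ≤ a * (a+b)^(q-1) + b * (a+b)^(q-1) :=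
        add_le_add (key a ha (by linarith)) (key b hb (by linarith))
  _ = (a + b) * (a+b)^(q-1) := by ring
  _ = (a + b) ^ q := by
        rw [← Real.rpow_one_add' (by positivity) (by intro h; linarith)]; ring_nf

lemma rpow_doubling {q : ℝ} (hq : 0 ≤ q) {v : ℝ} (hv : 0 ≤ v) :
    (1 + v) ^ q ≤ 2 ^ q * (1 + v ^ q) := by
  have hm : (1 + v) ≤ 2 * max 1 v := by
    rcases le_total v 1 with h | h
    · simp [max_eq_left h]; linarith
    · simp [max_eq_right h]; linarith
  calc (1 + v) ^ q ≤ (2 * max 1 v) ^ q :=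
        Real.rpow_le_rpow (by linarith) hm hq
  _ = 2 ^ q * (max 1 v) ^ q := Real.mul_rpow (by norm_num) (le_max_of_le_left zero_le_one)
  _ ≤ 2 ^ q * (1 + v ^ q) := by
        have : (max 1 v) ^ q ≤ 1 + v ^ q := by
          rcases le_total v 1 with h | h
          · simp [max_eq_left h]
            positivity
          · rw [max_eq_right h]
            have : (0:ℝ) ≤ v ^ q := Real.rpow_nonneg hv q
            linarith
        have h2 : (0:ℝ) ≤ 2 ^ q := by positivity
        nlinarith

lemma sq_rpow_eq_abs {q : ℝ} (x : ℝ) : ((x^2):ℝ) ^ (q/2) = |x| ^ q := by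
  rw [← sq_abs, ← Real.rpow_natCast |x| 2, ← Real.rpow_mul (abs_nonneg x)]
  norm_num
  rw [mul_div_cancel₀ q two_ne_zero]

lemma hasDerivAt_sq_rpow {p : ℝ} (hp : 2 ≤ p) (c s : ℝ) :
    HasDerivAt (fun x : ℝ => (((c + x) ^ 2):ℝ) ^ (p/2)) (p * (((c + s)^2):ℝ) ^ ((p-2)/2) * (c + s)) s := by
  have h1 : HasDerivAt (fun x : ℝ => ((c + x) ^ 2 : ℝ)) (2 * (c + s)) s := by
    have := ((hasDerivAt_id s).const_add c).fun_pow 2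
    simpa using this
  have h2 := h1.rpow_const (Or.inr (by linarith : 1 ≤ p/2))
  have he : p/2 - 1 = (p-2)/2 := by ring
  convert h2 using 1
  rw [he]; ring

lemma rpow_le_self_of_le_one {x q : ℝ} (hx0 : 0 ≤ x) (hx1 : x ≤ 1) (hq : 1 ≤ q) :
    x ^ q ≤ x := by
  rcases eq_or_lt_of_le hx0 with h | h
  · rw [← h, Real.zero_rpow (by linarith)]
  · calc x ^ q ≤ x ^ (1:ℝ) := Real.rpow_le_rpow_of_exponent_ge h hx1 hq
    _ = x := Real.rpow_one x

lemma two_rpow_sub_le_one {p : ℝ} (hp : 2 ≤ p) : (2:ℝ) ^ (1 - p) ≤ 1 :=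
  Real.rpow_le_one_of_one_le_of_nonpos (by norm_num) (by linarith)

lemma aux_pow_pos {p : ℝ} (hp : 2 ≤ p) {x : ℝ} (hx : 0 ≤ x) :
    ((x^2):ℝ)^((p-2)/2) * x = x^(p-1) := by
  rcases eq_or_lt_of_le hx with h | h
  · rw [← h]
    simp [Real.zero_rpow (by linarith : p - 1 ≠ 0)]
  · rw [sq_rpow_eq_abs, abs_of_nonneg hx, ← Real.rpow_add_one (ne_of_gt h)]
    ring_nf

lemma aux_pow_neg {p : ℝ} (hp : 2 ≤ p) {x : ℝ} (hx : x ≤ 0) :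
    ((x^2):ℝ)^((p-2)/2) * x = -((-x)^(p-1)) := by
  have h := aux_pow_pos hp (x := -x) (by linarith)
  have h2 : ((-x)^2 : ℝ) = x^2 := by ring
  rw [h2] at h
  nlinarith [h]

lemma one_var {p : ℝ} (hp : 2 ≤ p) (s : ℝ) :
    1 + p * s + 2^(1-p) * |s|^p ≤ |1+s|^p := by
  have hp0 : (0:ℝ) < p := by linarith
  set f : ℝ → ℝ := fun x => (((1+x)^2 : ℝ))^(p/2) - (1 + p*x + 2^(1-p) * (((x^2):ℝ))^(p/2)) with hf
  set f' : ℝ → ℝ := fun x =>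
    p * ((((1+x)^2):ℝ)^((p-2)/2) * (1+x)) - p - 2^(1-p) * (p * ((((x^2)):ℝ)^((p-2)/2) * x)) with hf'
  have hderiv : ∀ x, HasDerivAt f (f' x) x := by
    intro x
    have h1 := hasDerivAt_sq_rpow hp 1 x
    have h2 := hasDerivAt_sq_rpow hp 0 x
    simp only [zero_add] at h2
    have h3 : HasDerivAt (fun x : ℝ => 1 + p*x + 2^(1-p) * ((x^2:ℝ))^(p/2))
        (p + 2^(1-p) * (p * ((x^2:ℝ))^((p-2)/2) * x)) x := by
      have hlin : HasDerivAt (fun x : ℝ => 1 + p*x) p x := by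
        simpa using ((hasDerivAt_id x).const_mul p).const_add 1
      exact hlin.add (h2.const_mul _)
    have := h1.sub h3
    refine this.congr_deriv ?_
    simp only [hf']
    ring
  have hd : Differentiable ℝ f := fun x => (hderiv x).differentiableAt
  have hderiv_eq : ∀ x, deriv f x = f' x := fun x => (hderiv x).deriv
  have hf0 : f 0 = 0 := by
    simp [hf, Real.one_rpow, Real.zero_rpow (by positivity : p/2 ≠ 0)]
  have hpos : ∀ x : ℝ, 0 ≤ x → 0 ≤ f' x := by
    intro x hx
    have e1 := aux_pow_pos hp (x := 1 + x) (by linarith)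
    have e2 := aux_pow_pos hp (x := x) hx
    simp only [hf', e1, e2]
    have h1 : 1 + x^(p-1) ≤ (1+x)^(p-1) := by
      have := rpow_superadd (by linarith : (1:ℝ) ≤ p - 1) (zero_le_one) hx
      simpa using this
    have h2 : (2:ℝ)^(1-p) * x^(p-1) ≤ x^(p-1) := by
      have hxp : (0:ℝ) ≤ x^(p-1) := Real.rpow_nonneg hx _
      nlinarith [two_rpow_sub_le_one hp]
    nlinarith
  have hneg : ∀ x : ℝ, x ≤ 0 → f' x ≤ 0 := by
    intro x hx
    have e2 := aux_pow_neg hp (x := x) hx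
    simp only [hf', e2]
    set u := -x with hu
    have hu0 : 0 ≤ u := by simp [hu]; linarith
    have h2p : (0:ℝ) < 2^(1-p) := by positivity
    rcases le_total u 1 with hu1 | hu1
    · have e1 := aux_pow_pos hp (x := 1 + x) (by simp [hu] at hu1 ⊢; linarith)
      simp only [e1]
      have ha : (1+x)^(p-1) ≤ 1 + x := _root_.rpow_le_self_of_le_one (by linarith) (by linarith) (by linarith)
      have hb : u^(p-1) ≤ u := _root_.rpow_le_self_of_le_one hu0 hu1 (by linarith)
      have hc : (2:ℝ)^(1-p) * u^(p-1) ≤ u := by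
        have hup : (0:ℝ) ≤ u^(p-1) := Real.rpow_nonneg hu0 _
        nlinarith [two_rpow_sub_le_one hp]
      nlinarith
    · have e1 := aux_pow_neg hp (x := 1 + x) (by linarith)
      simp only [e1]
      have hneg1x : -(1+x) = u - 1 := by simp [hu]; ring
      rw [hneg1x]
      have hd := rpow_doubling (by linarith : (0:ℝ) ≤ p - 1) (v := u - 1) (by linarith)
      have he : (1:ℝ) + (u - 1) = u := by ring
      rw [he] at hd
      have hmul : (2:ℝ)^(1-p) * u^(p-1) ≤ 1 + (u-1)^(p-1) := by
        have h22 : (2:ℝ)^(1-p) * (2:ℝ)^(p-1) = 1 := by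
          rw [← Real.rpow_add (by norm_num : (0:ℝ) < 2)]
          norm_num
        calc (2:ℝ)^(1-p) * u^(p-1) ≤ (2:ℝ)^(1-p) * ((2:ℝ)^(p-1) * (1 + (u-1)^(p-1))) := by
              nlinarith
        _ = 1 + (u-1)^(p-1) := by rw [← mul_assoc, h22, one_mul]
      nlinarith
  have hmono : MonotoneOn f (Set.Ici 0) := by
    apply monotoneOn_of_deriv_nonneg (convex_Ici 0) hd.continuous.continuousOn
      hd.differentiableOn
    intro x hx
    rw [interior_Ici] at hx
    rw [hderiv_eq]
    exact hpos x (le_of_lt hx)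
  have hanti : AntitoneOn f (Set.Iic 0) := by
    apply antitoneOn_of_deriv_nonpos (convex_Iic 0) hd.continuous.continuousOn
      hd.differentiableOn
    intro x hx
    rw [interior_Iic] at hx
    rw [hderiv_eq]
    exact hneg x (le_of_lt hx)
  have hfs : 0 ≤ f s := by
    rcases le_total 0 s with h | h
    · have := hmono (Set.mem_Ici.2 (le_refl 0)) (Set.mem_Ici.2 h) h
      rw [hf0] at this; exact this
    · have := hanti (Set.mem_Iic.2 h) (Set.mem_Iic.2 (le_refl 0)) h
      rw [hf0] at this; exact this
  have key : (((1+s)^2:ℝ))^(p/2) = |1+s|^p := sq_rpow_eq_abs (1+s)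
  have key2 : ((s^2:ℝ))^(p/2) = |s|^p := sq_rpow_eq_abs s
  simp only [hf, key, key2] at hfs
  linarith

lemma two_var {p : ℝ} (hp : 2 ≤ p) (a t : ℝ) :
    |a|^p + p * (|a|^(p-2) * a) * t + 2^(1-p) * |t|^p ≤ |a + t|^p := by
  have hp0 : (0:ℝ) < p := by linarith
  -- first handle a = 0
  rcases eq_or_ne a 0 with rfl | ha
  · simp [Real.zero_rpow (ne_of_gt hp0)]
    have h1 : (2:ℝ)^(1-p) * |t|^p ≤ |t|^p := by
      have := Real.rpow_nonneg (abs_nonneg t) p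
      nlinarith [two_rpow_sub_le_one hp]
    linarith
  -- key case a > 0
  have key : ∀ a t : ℝ, 0 < a → |a|^p + p * (|a|^(p-2) * a) * t + 2^(1-p) * |t|^p ≤ |a + t|^p := by
    intro a t ha
    have h1 := one_var hp (t / a)
    have hap : (0:ℝ) < a ^ p := Real.rpow_pos_of_pos ha p
    have h2 := mul_le_mul_of_nonneg_left h1 (le_of_lt hap)
    have e1 : a ^ p * |1 + t/a|^p = |a + t|^p := by
      rw [← Real.mul_rpow (le_of_lt ha) (abs_nonneg _)]
      congr 1
      rw [show a * |1 + t/a| = |a| * |1 + t/a| from by rw [abs_of_pos ha], ← abs_mul]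
      congr 1
      field_simp
    have e2 : a ^ p * |t/a|^p = |t|^p := by
      rw [← Real.mul_rpow (le_of_lt ha) (abs_nonneg _)]
      congr 1
      rw [show a * |t/a| = |a| * |t/a| from by rw [abs_of_pos ha], ← abs_mul]
      congr 1
      field_simp
    have e3 : a ^ p * (p * (t/a)) = p * (|a|^(p-2) * a) * t := by
      rw [abs_of_pos ha]
      have : a^(p-2) * a = a^(p-1) := by
        rw [← Real.rpow_add_one (ne_of_gt ha)]; ring_nf
      rw [this]
      have h4 : a^p = a^(p-1) * a := by
        rw [← Real.rpow_add_one (ne_of_gt ha)]; ring_nf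
      rw [h4]
      field_simp
    calc |a|^p + p * (|a|^(p-2) * a) * t + 2^(1-p) * |t|^p
        = a^p * (1 + p * (t/a) + 2^(1-p) * |t/a|^p) := by
          rw [abs_of_pos ha, mul_add, mul_add, mul_one, e3]
          rw [show a^p * (2^(1-p) * |t/a|^p) = 2^(1-p) * (a^p * |t/a|^p) by ring, e2]
          rw [abs_of_pos ha]
    _ ≤ a^p * |1 + t/a|^p := h2
    _ = |a + t|^p := e1
  rcases lt_or_gt_of_ne ha with hneg | hpos
  · have h := key (-a) (-t) (by linarith)
    simp only [abs_neg, neg_mul, mul_neg, neg_neg, show -a + -t = -(a+t) by ring] at h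
    convert h using 3
  · exact key a t hpos

lemma step_ineq {Ω : Type} [MeasurableSpace Ω] {P : Measure Ω} [IsProbabilityMeasure P]
    {p : ℝ} (hp : 2 ≤ p) {X Y : Ω → ℝ} (hmX : Measurable X) (hmY : Measurable Y)
    (hX : MemLp X (ENNReal.ofReal p) P) (hY : MemLp Y (ENNReal.ofReal p) P)
    (hInd : IndepFun X Y P) (hY0 : ∫ ω, Y ω ∂P = 0) :
    (∫ ω, |X ω| ^ p ∂P) + 2^(1-p) * ∫ ω, |Y ω| ^ p ∂P ≤ ∫ ω, |X ω + Y ω| ^ p ∂P := by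
  have hp0 : (0:ℝ) < p := by linarith
  have hpne : ENNReal.ofReal p ≠ 0 := by
    simp [ENNReal.ofReal_eq_zero]; linarith
  have hptop : ENNReal.ofReal p ≠ ⊤ := ENNReal.ofReal_ne_top
  have htr : (ENNReal.ofReal p).toReal = p := ENNReal.toReal_ofReal (le_of_lt hp0)
  have habs : ∀ (f : Ω → ℝ), MemLp f (ENNReal.ofReal p) P →
      Integrable (fun ω => |f ω| ^ p) P := by
    intro f hf
    have := hf.integrable_norm_rpow hpne hptop
    simpa [htr, Real.norm_eq_abs] using this
  have hiX : Integrable (fun ω => |X ω| ^ p) P := habs X hX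
  have hiY : Integrable (fun ω => |Y ω| ^ p) P := habs Y hY
  have hiXY : Integrable (fun ω => |X ω + Y ω| ^ p) P := by
    have := habs _ (hX.add hY)
    exact this
  -- φ ∘ X
  set φ : ℝ → ℝ := fun x => |x|^(p-2) * x with hφ
  have hφm : Measurable φ :=
    ((((Real.continuous_rpow_const (by linarith : (0:ℝ) ≤ p-2)).comp continuous_abs).mul
      continuous_id).measurable)
  have hiφX : Integrable (fun ω => φ (X ω)) P := by
    have h1 : MemLp X (ENNReal.ofReal (p-1)) P :=
      hX.mono_exponent (ENNReal.ofReal_le_ofReal (by linarith))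
    have h2 : Integrable (fun ω => |X ω| ^ (p-1)) P := by
      have := h1.integrable_norm_rpow (by simp [ENNReal.ofReal_eq_zero]; linarith) ENNReal.ofReal_ne_top
      simpa [ENNReal.toReal_ofReal (by linarith : (0:ℝ) ≤ p - 1), Real.norm_eq_abs] using this
    refine h2.mono ((hφm.comp hmX).aestronglyMeasurable) ?_
    filter_upwards with ω
    simp only [hφ, Real.norm_eq_abs, abs_mul, abs_abs]
    rw [abs_of_nonneg (Real.rpow_nonneg (abs_nonneg _) _)]
    rcases eq_or_ne (X ω) 0 with h | h
    · simp [h, Real.rpow_nonneg, abs_nonneg, le_abs_self]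
    · rw [← Real.rpow_add_one (by simpa using h : |X ω| ≠ 0)]
      ring_nf
      rw [abs_of_nonneg (Real.rpow_nonneg (abs_nonneg _) _)]
  have hYint : Integrable Y P := hY.integrable (by simp [ENNReal.one_le_ofReal]; linarith)
  have hIndφ : IndepFun (fun ω => φ (X ω)) Y P := hInd.comp hφm measurable_id
  have hiφXY : Integrable (fun ω => φ (X ω) * Y ω) P := by
    have := hIndφ.integrable_mul hiφX hYint
    exact this
  have hmid : ∫ ω, φ (X ω) * Y ω ∂P = 0 := by
    have := hIndφ.integral_mul_eq_mul_integral hiφX.aestronglyMeasurable hYint.aestronglyMeasurable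
    have h2 : ∫ ω, φ (X ω) * Y ω ∂P = (∫ ω, φ (X ω) ∂P) * ∫ ω, Y ω ∂P := this
    rw [h2, hY0, mul_zero]
  -- pointwise inequality
  have hpt : ∀ ω, |X ω|^p + p * (φ (X ω) * Y ω) + 2^(1-p) * |Y ω|^p ≤ |X ω + Y ω|^p := by
    intro ω
    have := two_var hp (X ω) (Y ω)
    simp only [hφ]
    nlinarith [this]
  have hLint : Integrable (fun ω => |X ω|^p + p * (φ (X ω) * Y ω) + 2^(1-p) * |Y ω|^p) P :=
    (hiX.add (hiφXY.const_mul p)).add (hiY.const_mul _)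
  have hAB : Integrable (fun ω => |X ω|^p + p * (φ (X ω) * Y ω)) P :=
    hiX.add (hiφXY.const_mul p)
  have := integral_mono hLint hiXY hpt
  rw [integral_add hAB (hiY.const_mul _), integral_add hiX (hiφXY.const_mul p),
    integral_const_mul, integral_const_mul, hmid] at this
  simpa using this

lemma sum_bound {Ω : Type} [MeasurableSpace Ω] {P : Measure Ω} [IsProbabilityMeasure P]
    {p : ℝ} (hp : 2 ≤ p) {N : ℕ} {g : Fin N → Ω → ℝ} (hmeas : ∀ n, Measurable (g n))
    (hind : iIndepFun g P)
    (hLp : ∀ n, MemLp (g n) (ENNReal.ofReal p) P)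
    (hmean : ∀ n, ∫ ω, g n ω ∂P = 0) (s : Finset (Fin N)) :
    2^(1-p) * ∑ n ∈ s, ∫ ω, |g n ω|^p ∂P ≤ ∫ ω, |∑ n ∈ s, g n ω|^p ∂P := by
  have hp0 : (0:ℝ) < p := by linarith
  induction s using Finset.induction_on with
  | empty => simp [Real.zero_rpow (ne_of_gt hp0)]
  | insert i s hi ih =>
    have hX : MemLp (fun ω => ∑ n ∈ s, g n ω) (ENNReal.ofReal p) P := by
      have := memLp_finset_sum' s (fun n (_ : n ∈ s) => hLp n)
      have he : (∑ j ∈ s, g j) = fun ω => ∑ n ∈ s, g n ω := by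
        ext ω; simp [Finset.sum_apply]
      rwa [he] at this
    have hmX : Measurable (fun ω => ∑ n ∈ s, g n ω) := by
      apply Finset.measurable_sum
      exact fun n _ => hmeas n
    have hInd : IndepFun (fun ω => ∑ n ∈ s, g n ω) (g i) P := by
      have := hind.indepFun_finset_sum_of_notMem hmeas hi
      have he : (∑ j ∈ s, g j) = fun ω => ∑ n ∈ s, g n ω := by
        ext ω; simp [Finset.sum_apply]
      rwa [he] at this
    have hstep := step_ineq hp hmX (hmeas i) hX (hLp i) hInd (hmean i)
    rw [Finset.sum_insert hi, mul_add]
    have he2 : ∀ ω, ∑ n ∈ insert i s, g n ω = (∑ n ∈ s, g n ω) + g i ω := by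
      intro ω; rw [Finset.sum_insert hi]; ring
    have he3 : ∫ ω, |∑ n ∈ insert i s, g n ω|^p ∂P
        = ∫ ω, |(∑ n ∈ s, g n ω) + g i ω|^p ∂P := by
      congr 1; ext ω; rw [he2]
    rw [he3]
    have h2p1 : (2:ℝ)^(1-p) * (∫ ω, |(∑ n ∈ s, g n ω)|^p ∂P) ≤ ∫ ω, |(∑ n ∈ s, g n ω)|^p ∂P := by
      have hnn : 0 ≤ ∫ ω, |(∑ n ∈ s, g n ω)|^p ∂P := by
        apply integral_nonneg; intro ω; positivity
      nlinarith [two_rpow_sub_le_one hp]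
    calc 2^(1-p) * ∫ ω, |g i ω|^p ∂P + 2^(1-p) * ∑ n ∈ s, ∫ ω, |g n ω|^p ∂P
        ≤ 2^(1-p) * ∫ ω, |g i ω|^p ∂P + ∫ ω, |(∑ n ∈ s, g n ω)|^p ∂P := by
          linarith [le_trans ih (le_refl _), ih]
    _ ≤ ∫ ω, |(∑ n ∈ s, g n ω) + g i ω|^p ∂P := by linarith [hstep]

lemma iIndepFun_ae_eq {Ω : Type} [MeasurableSpace Ω] {P : Measure Ω} {N : ℕ}
    {f f' : Fin N → Ω → ℝ} (h : iIndepFun f P)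
    (hff' : ∀ i, f i =ᵐ[P] f' i) :
    iIndepFun f' P := by
  rw [iIndepFun_iff_measure_inter_preimage_eq_mul] at h ⊢
  intro S sets hsets
  have hall : ∀ᵐ ω ∂P, ∀ i, f i ω = f' i ω := ae_all_iff.2 hff'
  have h1 : (⋂ i ∈ S, f' i ⁻¹' sets i) =ᵐ[P] (⋂ i ∈ S, f i ⁻¹' sets i) := by
    filter_upwards [hall] with ω hω
    change (ω ∈ ⋂ i ∈ S, f' i ⁻¹' sets i) = (ω ∈ ⋂ i ∈ S, f i ⁻¹' sets i)
    simp only [Set.mem_iInter, Set.mem_preimage, eq_iff_iff]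
    constructor <;> intro hmem i hi
    · rw [hω i]; exact hmem i hi
    · rw [← hω i]; exact hmem i hi
  have h2 : ∀ i ∈ S, (f' i ⁻¹' sets i : Set Ω) =ᵐ[P] (f i ⁻¹' sets i) := by
    intro i _
    filter_upwards [hff' i] with ω hω
    change (f' i ω ∈ sets i) = (f i ω ∈ sets i)
    rw [hω]
  rw [measure_congr h1, h S hsets]
  exact Finset.prod_congr rfl (fun i hi => (measure_congr (h2 i hi)).symm)

set_option maxHeartbeats 1000000 in
/-- Classical Rosenthal inequality, lower bound: for `2 ≤ p < ∞` there is a constant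
`c_p` depending only on `p` such that for every finite sequence of independent
mean-zero random variables `(g_n)` in `L_p` on a probability space,
`(Σ_n ‖g_n‖_2²)^{1/2} + (Σ_n ‖g_n‖_p^p)^{1/p} ≤ c_p ‖Σ_n g_n‖_p`. -/
theorem rosenthal_lower (p : ℝ) (hp : 2 ≤ p) :
    ∃ c : ℝ, 0 < c ∧
      ∀ (Ω : Type) (_ : MeasurableSpace Ω) (P : Measure Ω), IsProbabilityMeasure P →
      ∀ (N : ℕ) (g : Fin N → Ω → ℝ),
        iIndepFun g P →
        (∀ n, MemLp (g n) (ENNReal.ofReal p) P) →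
        (∀ n, ∫ ω, g n ω ∂P = 0) →
        (∑ n, ((eLpNorm (g n) 2 P).toReal) ^ (2:ℝ)) ^ ((1:ℝ)/2) +
            (∑ n, ((eLpNorm (g n) (ENNReal.ofReal p) P).toReal) ^ p) ^ (1/p) ≤
          c * (eLpNorm (fun ω => ∑ n, g n ω) (ENNReal.ofReal p) P).toReal := by
  refine ⟨4, by norm_num, ?_⟩
  intro Ω mΩ P hP N g hind hLp hmean
  haveI := hP
  have hp0 : (0:ℝ) < p := by linarith
  have hpne : ENNReal.ofReal p ≠ 0 := by simp [ENNReal.ofReal_eq_zero]; linarith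
  have hptop : ENNReal.ofReal p ≠ ⊤ := ENNReal.ofReal_ne_top
  have htr : (ENNReal.ofReal p).toReal = p := ENNReal.toReal_ofReal (le_of_lt hp0)
  have h2ne : ENNReal.ofReal 2 ≠ 0 := by simp [ENNReal.ofReal_eq_zero]
  have h2top : ENNReal.ofReal 2 ≠ ⊤ := ENNReal.ofReal_ne_top
  have h2tr : (ENNReal.ofReal 2).toReal = 2 := ENNReal.toReal_ofReal (by norm_num)
  have h2eq : (2 : ENNReal) = ENNReal.ofReal 2 := by norm_num
  -- measurable modification
  set g' : Fin N → Ω → ℝ := fun n => ((hLp n).1.mk (g n)) with hg'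
  have hmk : ∀ n, g n =ᵐ[P] g' n := fun n => ((hLp n).1).ae_eq_mk
  have hmeas : ∀ n, Measurable (g' n) := fun n =>
    ((hLp n).1).stronglyMeasurable_mk.measurable
  have hind' : iIndepFun g' P := iIndepFun_ae_eq hind hmk
  have hLp' : ∀ n, MemLp (g' n) (ENNReal.ofReal p) P := fun n => (hLp n).ae_eq (hmk n)
  have hmean' : ∀ n, ∫ ω, g' n ω ∂P = 0 := fun n => by
    rw [← integral_congr_ae (hmk n)]; exact hmean n
  have hLp2 : ∀ n, MemLp (g' n) (ENNReal.ofReal 2) P := fun n =>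
    (hLp' n).mono_exponent (ENNReal.ofReal_le_ofReal hp)
  have hsum_ae : (fun ω => ∑ n, g n ω) =ᵐ[P] (fun ω => ∑ n, g' n ω) := by
    filter_upwards [ae_all_iff.2 hmk] with ω hω
    exact Finset.sum_congr rfl (fun n _ => hω n)
  set S : Ω → ℝ := fun ω => ∑ n, g' n ω with hS
  have hSLp : MemLp S (ENNReal.ofReal p) P := by
    have := memLp_finset_sum' Finset.univ (fun (n : Fin N) (_ : n ∈ Finset.univ) => hLp' n)
    have he : (∑ j, g' j) = S := by ext ω; simp [hS, Finset.sum_apply]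
    rwa [he] at this
  have hSLp2 : MemLp S (ENNReal.ofReal 2) P :=
    hSLp.mono_exponent (ENNReal.ofReal_le_ofReal hp)
  -- quantities
  set A : Fin N → ℝ := fun n => ∫ ω, |g' n ω|^p ∂P with hA
  set B : Fin N → ℝ := fun n => ∫ ω, |g' n ω|^(2:ℝ) ∂P with hB
  set Tp : ℝ := ∫ ω, |S ω|^p ∂P with hTp
  set T2 : ℝ := ∫ ω, |S ω|^(2:ℝ) ∂P with hT2
  have hAnn : ∀ n, 0 ≤ A n := fun n => integral_nonneg (fun ω => by positivity)
  have hBnn : ∀ n, 0 ≤ B n := fun n => integral_nonneg (fun ω => by positivity)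
  have hTpnn : 0 ≤ Tp := integral_nonneg (fun ω => by positivity)
  have hT2nn : 0 ≤ T2 := integral_nonneg (fun ω => by positivity)
  have key_p : 2^(1-p) * ∑ n, A n ≤ Tp := sum_bound hp hmeas hind' hLp' hmean' Finset.univ
  have key_2 : 2^(1-(2:ℝ)) * ∑ n, B n ≤ T2 :=
    sum_bound (le_refl 2) hmeas hind' hLp2 hmean' Finset.univ
  -- eLpNorm identities
  have hnormp : ∀ n, (eLpNorm (g n) (ENNReal.ofReal p) P).toReal = (A n) ^ (p⁻¹) := by
    intro n
    rw [eLpNorm_congr_ae (hmk n), (hLp' n).eLpNorm_eq_integral_rpow_norm hpne hptop]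
    rw [ENNReal.toReal_ofReal (by positivity)]
    simp [htr, Real.norm_eq_abs, hA]
  have hnorm2 : ∀ n, (eLpNorm (g n) 2 P).toReal = (B n) ^ ((2:ℝ)⁻¹) := by
    intro n
    rw [h2eq, eLpNorm_congr_ae (hmk n), (hLp2 n).eLpNorm_eq_integral_rpow_norm h2ne h2top]
    rw [ENNReal.toReal_ofReal (by positivity)]
    simp [h2tr, Real.norm_eq_abs, hB]
  have hnormS : (eLpNorm (fun ω => ∑ n, g n ω) (ENNReal.ofReal p) P).toReal = Tp ^ (p⁻¹) := by
    rw [eLpNorm_congr_ae hsum_ae, hSLp.eLpNorm_eq_integral_rpow_norm hpne hptop]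
    rw [ENNReal.toReal_ofReal (by positivity)]
    simp [htr, Real.norm_eq_abs, hTp, hS]
  have hnormS2 : (eLpNorm S (ENNReal.ofReal 2) P).toReal = T2 ^ ((2:ℝ)⁻¹) := by
    rw [hSLp2.eLpNorm_eq_integral_rpow_norm h2ne h2top]
    rw [ENNReal.toReal_ofReal (by positivity)]
    simp [h2tr, Real.norm_eq_abs, hT2, hS]
  -- sums of powers
  have hsumA : ∑ n, ((eLpNorm (g n) (ENNReal.ofReal p) P).toReal) ^ p = ∑ n, A n := by
    apply Finset.sum_congr rfl
    intro n _
    rw [hnormp n, ← Real.rpow_mul (hAnn n), inv_mul_cancel₀ (ne_of_gt hp0), Real.rpow_one]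
  have hsumB : ∑ n, ((eLpNorm (g n) 2 P).toReal) ^ (2:ℝ) = ∑ n, B n := by
    apply Finset.sum_congr rfl
    intro n _
    rw [hnorm2 n, ← Real.rpow_mul (hBnn n)]
    norm_num
  -- bounds on sums
  have hAle : ∑ n, A n ≤ 2^(p-1) * Tp := by
    have h22 : (2:ℝ)^(p-1) * (2:ℝ)^(1-p) = 1 := by
      rw [← Real.rpow_add (by norm_num : (0:ℝ) < 2)]; norm_num
    have h2pos : (0:ℝ) < 2^(p-1) := by positivity
    calc ∑ n, A n = 2^(p-1) * (2^(1-p) * ∑ n, A n) := by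
          rw [← mul_assoc, h22, one_mul]
    _ ≤ 2^(p-1) * Tp := by nlinarith
  have hBle : ∑ n, B n ≤ 2 * T2 := by
    have : (2:ℝ)^(1-(2:ℝ)) = 2⁻¹ := by
      norm_num [Real.rpow_neg_one]
    rw [this] at key_2
    linarith
  -- term 2 bound
  have hterm2 : (∑ n, ((eLpNorm (g n) (ENNReal.ofReal p) P).toReal) ^ p) ^ (1/p)
      ≤ 2 * Tp ^ (p⁻¹) := by
    rw [hsumA, one_div]
    calc (∑ n, A n) ^ (p⁻¹) ≤ (2^(p-1) * Tp) ^ (p⁻¹) :=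
          Real.rpow_le_rpow (Finset.sum_nonneg (fun n _ => hAnn n)) hAle (by positivity)
    _ = (2^(p-1)) ^ (p⁻¹) * Tp ^ (p⁻¹) := Real.mul_rpow (by positivity) hTpnn
    _ ≤ 2 * Tp ^ (p⁻¹) := by
        have h1 : ((2:ℝ)^(p-1)) ^ (p⁻¹) = 2 ^ ((p-1) * p⁻¹) :=
          (Real.rpow_mul (by norm_num) _ _).symm
        have h2 : (2:ℝ) ^ ((p-1) * p⁻¹) ≤ 2 ^ (1:ℝ) := by
          apply Real.rpow_le_rpow_of_exponent_le (by norm_num)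
          rw [mul_inv_le_iff₀ hp0]
          linarith
        have h3 : (0:ℝ) ≤ Tp ^ (p⁻¹) := Real.rpow_nonneg hTpnn _
        rw [h1]
        nlinarith [Real.rpow_one (2:ℝ)]
  -- term 1 bound
  have hterm1 : (∑ n, ((eLpNorm (g n) 2 P).toReal) ^ (2:ℝ)) ^ ((1:ℝ)/2)
      ≤ 2 * Tp ^ (p⁻¹) := by
    rw [hsumB, one_div]
    have hstep1 : (∑ n, B n) ^ ((2:ℝ)⁻¹) ≤ 2 * T2 ^ ((2:ℝ)⁻¹) := by
      calc (∑ n, B n) ^ ((2:ℝ)⁻¹) ≤ (2 * T2) ^ ((2:ℝ)⁻¹) :=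
            Real.rpow_le_rpow (Finset.sum_nonneg (fun n _ => hBnn n)) hBle (by norm_num)
      _ = (2:ℝ) ^ ((2:ℝ)⁻¹) * T2 ^ ((2:ℝ)⁻¹) := Real.mul_rpow (by norm_num) hT2nn
      _ ≤ 2 * T2 ^ ((2:ℝ)⁻¹) := by
          have h2 : (2:ℝ) ^ ((2:ℝ)⁻¹) ≤ 2 ^ (1:ℝ) :=
            Real.rpow_le_rpow_of_exponent_le (by norm_num) (by norm_num)
          have h3 : (0:ℝ) ≤ T2 ^ ((2:ℝ)⁻¹) := Real.rpow_nonneg hT2nn _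
          nlinarith [Real.rpow_one (2:ℝ)]
    have hstep2 : T2 ^ ((2:ℝ)⁻¹) ≤ Tp ^ (p⁻¹) := by
      have hSp_eq : (eLpNorm S (ENNReal.ofReal p) P).toReal = Tp ^ (p⁻¹) := by
        rw [hSLp.eLpNorm_eq_integral_rpow_norm hpne hptop, ENNReal.toReal_ofReal (by positivity)]
        simp [htr, Real.norm_eq_abs, hTp, hS]
      rw [← hnormS2, ← hSp_eq]
      exact ENNReal.toReal_mono hSLp.2.ne
        (eLpNorm_le_eLpNorm_of_exponent_le (ENNReal.ofReal_le_ofReal hp) hSLp.1)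
    nlinarith [Real.rpow_nonneg hT2nn ((2:ℝ)⁻¹)]
  have hfin : (0:ℝ) ≤ Tp ^ (p⁻¹) := Real.rpow_nonneg hTpnn _
  rw [hnormS]
  nlinarith [hterm1, hterm2]

end
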